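/- Let K be a symmetric invertible r×r integer matrix with even diagonal entries, M ≥ 1 an integer, and s ∈ ℤ^r. Assume the quotient ℤ^r/Kℤ^r is the internal direct sum of cyclic subgroups generated by the classes of a₁,…,a_k ∈ ℤ^r, where the class of a_i has order n_i and n_i·a_i = K·w_i with w_i ∈ ℤ^r. Set d_i = gcd(M, n_i). Then the image of the homomorphism u ↦ exp(2πi·sᵀK⁻¹u)·exp(iπ·M·uᵀK⁻¹u) on {u ∈ ℤ^r : M·u ∈ Kℤ^r} is a finite cyclic subgroup of the circle group of order P = lcm_{1≤i≤k} ( 2d_i / gcd(2d_i, 2·sᵀw_i + (M/d_i)·wᵢᵀK w_i) ). -/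

import Mathlib

noncomputable section

/-- The rational quadratic form `aᵀ K⁻¹ b` (computed over `ℝ`) attached to an integer
matrix `K`. -/
def qform (r : ℕ) (K : Matrix (Fin r) (Fin r) ℤ) (a b : Fin r → ℤ) : ℝ :=
  ∑ i : Fin r, ∑ j : Fin r,
    (a i : ℝ) * ((K.map (fun n : ℤ => (n : ℝ)))⁻¹ i j) * (b j : ℝ)

/-- The relabeling phase `f(u) = exp(2πi sᵀK⁻¹u) · exp(iπ M uᵀK⁻¹u)`. -/
def phaseF (r : ℕ) (K : Matrix (Fin r) (Fin r) ℤ) (M : ℕ) (s : Fin r → ℤ)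
    (u : Fin r → ℤ) : ℂ :=
  Complex.exp (2 * (Real.pi : ℂ) * Complex.I * (qform r K s u : ℝ)) *
    Complex.exp ((Real.pi : ℂ) * Complex.I * (M : ℂ) * (qform r K u u : ℝ))

/-- The anyon quotient `ℤ^r / K ℤ^r`. -/
abbrev KQuot (r : ℕ) (K : Matrix (Fin r) (Fin r) ℤ) : Type :=
  (Fin r → ℤ) ⧸ LinearMap.range (Matrix.mulVecLin K)

namespace RelabelingAux

open Matrix Finset Complex

variable {r : ℕ}

lemma symm_dot (K : Matrix (Fin r) (Fin r) ℤ) (hsymm : K.IsSymm) (x y : Fin r → ℤ) :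
    (K.mulVec x) ⬝ᵥ y = (K.mulVec y) ⬝ᵥ x := by
  simp only [Matrix.mulVec, dotProduct, Finset.sum_mul]
  rw [Finset.sum_comm]
  exact Finset.sum_congr rfl fun b _ => Finset.sum_congr rfl fun a _ => by
    rw [hsymm.apply a b]; ring

lemma even_quad (K : Matrix (Fin r) (Fin r) ℤ) (hsymm : K.IsSymm)
    (heven : ∀ i, Even (K i i)) (v : Fin r → ℤ) :
    Even ((K.mulVec v) ⬝ᵥ v) := by
  have expand : ∀ a b : Fin r → ℤ, (K.mulVec (a+b)) ⬝ᵥ (a+b)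
      = (K.mulVec a) ⬝ᵥ a + (K.mulVec b) ⬝ᵥ b + 2 * ((K.mulVec a) ⬝ᵥ b) := by
    intro a b
    rw [Matrix.mulVec_add, add_dotProduct, dotProduct_add, dotProduct_add,
      symm_dot K hsymm b a]
    ring
  have key : ∀ (t : Finset (Fin r)) (x : Fin r → Fin r → ℤ),
      (∀ i ∈ t, Even ((K.mulVec (x i)) ⬝ᵥ (x i))) →
      Even ((K.mulVec (∑ i ∈ t, x i)) ⬝ᵥ (∑ i ∈ t, x i)) := by
    intro t
    induction t using Finset.induction with
    | empty => intro x _; simp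
    | @insert _ _ hnotmem ih =>
      intro x hx
      rw [Finset.sum_insert hnotmem, expand]
      exact ((hx _ (Finset.mem_insert_self _ _)).add
        (ih x (fun i hi => hx i (Finset.mem_insert_of_mem hi)))).add (even_two_mul _)
  have hv : v = ∑ i : Fin r, Pi.single i (v i) := (Finset.univ_sum_single v).symm
  rw [hv]
  apply key
  intro i _
  have : (K.mulVec (Pi.single i (v i))) ⬝ᵥ (Pi.single i (v i)) = K i i * v i * v i := by
    simp [Matrix.mulVec_single, dotProduct, Pi.single_apply, mul_comm]
  rw [this]
  exact ((heven i).mul_right _).mul_right _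

lemma nsmul_dot (M : ℕ) (u w : Fin r → ℤ) : ((M • u) ⬝ᵥ w) = (M : ℤ) * (u ⬝ᵥ w) := by
  simp only [dotProduct, Pi.smul_apply, nsmul_eq_mul, Finset.mul_sum]
  exact Finset.sum_congr rfl fun i _ => by ring

lemma dot_nsmul (M : ℕ) (u w : Fin r → ℤ) : (u ⬝ᵥ (M • w)) = (M : ℤ) * (u ⬝ᵥ w) := by
  simp only [dotProduct, Pi.smul_apply, nsmul_eq_mul, Finset.mul_sum]
  exact Finset.sum_congr rfl fun i _ => by ring

/-- The integer exponent `ν(u,w') = 2 sᵀw' + M uᵀw'`. -/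
def nuF (M : ℕ) (s u w' : Fin r → ℤ) : ℤ := 2 * (s ⬝ᵥ w') + (M : ℤ) * (u ⬝ᵥ w')

lemma valid_dot_symm (K : Matrix (Fin r) (Fin r) ℤ) (hsymm : K.IsSymm) (M : ℕ) (hM : M ≠ 0)
    (u v wu wv : Fin r → ℤ) (hu : M • u = K.mulVec wu) (hv : M • v = K.mulVec wv) :
    u ⬝ᵥ wv = v ⬝ᵥ wu := by
  have h1 : (M : ℤ) * (u ⬝ᵥ wv) = (M : ℤ) * (v ⬝ᵥ wu) := by
    calc (M : ℤ) * (u ⬝ᵥ wv) = ((M • u) ⬝ᵥ wv) := (nsmul_dot M u wv).symm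
      _ = (K.mulVec wu) ⬝ᵥ wv := by rw [hu]
      _ = (K.mulVec wv) ⬝ᵥ wu := symm_dot K hsymm wu wv
      _ = ((M • v) ⬝ᵥ wu) := by rw [hv]
      _ = (M : ℤ) * (v ⬝ᵥ wu) := nsmul_dot M v wu
  exact mul_left_cancel₀ (by exact_mod_cast hM) h1

lemma nu_add (K : Matrix (Fin r) (Fin r) ℤ) (hsymm : K.IsSymm) (M : ℕ) (hM : M ≠ 0)
    (s u v wu wv : Fin r → ℤ) (hu : M • u = K.mulVec wu) (hv : M • v = K.mulVec wv) :
    (2 * M : ℤ) ∣ nuF M s (u + v) (wu + wv) - nuF M s u wu - nuF M s v wv := by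
  have hsym := valid_dot_symm K hsymm M hM u v wu wv hu hv
  refine ⟨u ⬝ᵥ wv, ?_⟩
  simp only [nuF, dotProduct_add, add_dotProduct]
  linear_combination (-(M : ℤ)) * hsym

lemma nu_smul (M : ℕ) (s u wu : Fin r → ℤ) (c : ℤ) :
    (2 * M : ℤ) ∣ nuF M s (c • u) (c • wu) - c * nuF M s u wu := by
  obtain ⟨e, he⟩ := Int.even_mul_succ_self (c - 1)
  refine ⟨e * (u ⬝ᵥ wu), ?_⟩
  simp only [nuF, smul_dotProduct, dotProduct_smul, smul_eq_mul]
  have hc : c * c - c = 2 * e := by linear_combination he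
  linear_combination ((M : ℤ) * (u ⬝ᵥ wu)) * hc

lemma nu_Kv (K : Matrix (Fin r) (Fin r) ℤ) (hsymm : K.IsSymm) (heven : ∀ i, Even (K i i))
    (M : ℕ) (s v : Fin r → ℤ) :
    (2 * M : ℤ) ∣ nuF M s (K.mulVec v) (M • v) := by
  obtain ⟨e, he⟩ := even_quad K hsymm heven v
  refine ⟨s ⬝ᵥ v + (M : ℤ) * e, ?_⟩
  simp only [nuF]
  rw [dot_nsmul, dot_nsmul]
  linear_combination (M : ℤ) ^ 2 * he

lemma nu_sum (K : Matrix (Fin r) (Fin r) ℤ) (hsymm : K.IsSymm) (M : ℕ) (hM : M ≠ 0)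
    (s : Fin r → ℤ) {k : ℕ} (t : Finset (Fin k)) (x y : Fin k → Fin r → ℤ)
    (hval : ∀ i ∈ t, M • x i = K.mulVec (y i)) :
    (2 * M : ℤ) ∣ nuF M s (∑ i ∈ t, x i) (∑ i ∈ t, y i) - ∑ i ∈ t, nuF M s (x i) (y i) := by
  induction t using Finset.induction with
  | empty => simp [nuF]
  | @insert j t hnotmem ih =>
    have hKs : K.mulVec (∑ i ∈ t, y i) = ∑ i ∈ t, K.mulVec (y i) := by
      rw [← Matrix.mulVecLin_apply, map_sum]
      simp [Matrix.mulVecLin_apply]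
    have hvs : M • (∑ i ∈ t, x i) = K.mulVec (∑ i ∈ t, y i) := by
      rw [Finset.smul_sum, hKs]
      exact Finset.sum_congr rfl fun i hi => hval i (Finset.mem_insert_of_mem hi)
    have h1 := nu_add K hsymm M hM s (x j) (∑ i ∈ t, x i) (y j) (∑ i ∈ t, y i)
      (hval j (Finset.mem_insert_self _ _)) hvs
    have h2 := ih (fun i hi => hval i (Finset.mem_insert_of_mem hi))
    rw [Finset.sum_insert hnotmem, Finset.sum_insert hnotmem, Finset.sum_insert hnotmem]
    have := Int.dvd_add h1 h2
    convert this using 1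
    ring

lemma cast_mulVec (K : Matrix (Fin r) (Fin r) ℤ) (v : Fin r → ℤ) :
    (K.map (fun n : ℤ => (n : ℝ))).mulVec (fun j => (v j : ℝ))
      = fun i => ((K.mulVec v) i : ℝ) := by
  funext i
  simp only [Matrix.mulVec, dotProduct, Matrix.map_apply]
  push_cast
  rfl

lemma det_cast_ne (K : Matrix (Fin r) (Fin r) ℤ) (hdet : K.det ≠ 0) :
    (K.map (fun n : ℤ => (n : ℝ))).det ≠ 0 := by
  have : ((K.det : ℤ) : ℝ) = (K.map (fun n : ℤ => (n : ℝ))).det := by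
    have := RingHom.map_det (Int.castRingHom ℝ) K
    simpa [RingHom.mapMatrix_apply] using this
  rw [← this]
  exact_mod_cast hdet

lemma mulVec_int_inj (K : Matrix (Fin r) (Fin r) ℤ) (hdet : K.det ≠ 0) {x y : Fin r → ℤ}
    (h : K.mulVec x = K.mulVec y) : x = y := by
  set A := K.map (fun n : ℤ => (n : ℝ)) with hA
  have hdet' : IsUnit A.det := isUnit_iff_ne_zero.mpr (det_cast_ne K hdet)
  have hx : A.mulVec (fun j => (x j : ℝ)) = A.mulVec (fun j => (y j : ℝ)) := by
    rw [cast_mulVec, cast_mulVec, h]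
  have h2 : (fun j => (x j : ℝ)) = (fun j => (y j : ℝ)) := by
    have := congrArg (fun z => A⁻¹.mulVec z) hx
    simpa [Matrix.mulVec_mulVec, Matrix.nonsing_inv_mul A hdet', Matrix.one_mulVec] using this
  funext j
  exact_mod_cast congrFun h2 j

lemma qform_eq (K : Matrix (Fin r) (Fin r) ℤ) (hdet : K.det ≠ 0) (M : ℕ) (hM : M ≠ 0)
    (a u w' : Fin r → ℤ) (h : M • u = K.mulVec w') :
    qform r K a u = ((a ⬝ᵥ w' : ℤ) : ℝ) / (M : ℝ) := by
  set A := K.map (fun n : ℤ => (n : ℝ)) with hA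
  have hdet' : IsUnit A.det := isUnit_iff_ne_zero.mpr (det_cast_ne K hdet)
  have hM' : (M : ℝ) ≠ 0 := Nat.cast_ne_zero.mpr hM
  have h1 : A.mulVec (fun j => (w' j : ℝ)) = (M : ℝ) • (fun j => (u j : ℝ)) := by
    rw [cast_mulVec, ← h]
    funext i
    simp
  have h2 : (M : ℝ) • (A⁻¹.mulVec (fun j => (u j : ℝ))) = (fun j => (w' j : ℝ)) := by
    rw [← Matrix.mulVec_smul, ← h1, Matrix.mulVec_mulVec, Matrix.nonsing_inv_mul A hdet',
      Matrix.one_mulVec]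
  have h3 : A⁻¹.mulVec (fun j => (u j : ℝ)) = (M : ℝ)⁻¹ • (fun j => (w' j : ℝ)) := by
    rw [← h2]; funext i; simp; field_simp
  have h4 : qform r K a u = (fun i => (a i : ℝ)) ⬝ᵥ (A⁻¹.mulVec (fun j => (u j : ℝ))) := by
    simp only [qform, dotProduct, Matrix.mulVec, Finset.mul_sum, ← hA]
    exact Finset.sum_congr rfl fun i _ => Finset.sum_congr rfl fun j _ => by ring
  rw [h4, h3]
  simp only [dotProduct, Pi.smul_apply, smul_eq_mul]
  push_cast
  rw [eq_div_iff hM', Finset.sum_mul]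
  exact Finset.sum_congr rfl fun i _ => by field_simp

/-- `E(m) = exp(2πi·m/(2M))`. -/
def EE (M : ℕ) (m : ℤ) : ℂ :=
  Complex.exp ((m : ℂ) * (2 * (Real.pi : ℂ) * Complex.I / (2 * (M : ℂ))))

lemma EE_add (M : ℕ) (m m' : ℤ) : EE M (m + m') = EE M m * EE M m' := by
  rw [EE, EE, EE, ← Complex.exp_add]
  push_cast
  ring_nf

lemma EE_pow (M : ℕ) (m : ℤ) (N : ℕ) : (EE M m) ^ N = EE M (N * m) := by
  rw [EE, EE, ← Complex.exp_nat_mul]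
  push_cast
  ring_nf

lemma EE_one (M : ℕ) (hM : M ≠ 0) (m : ℤ) (h : (2 * M : ℤ) ∣ m) : EE M m = 1 := by
  obtain ⟨x, hx⟩ := h
  subst hx
  rw [EE]
  have hM' : (M : ℂ) ≠ 0 := Nat.cast_ne_zero.mpr hM
  have : ((2 * (M : ℤ) * x : ℤ) : ℂ) * (2 * (Real.pi : ℂ) * Complex.I / (2 * (M : ℂ)))
      = (x : ℂ) * (2 * (Real.pi : ℂ) * Complex.I) := by
    push_cast
    field_simp
  rw [this]
  exact Complex.exp_int_mul_two_pi_mul_I x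

lemma EE_congr (M : ℕ) (hM : M ≠ 0) {m m' : ℤ} (h : (2 * M : ℤ) ∣ m - m') :
    EE M m = EE M m' := by
  have : EE M m = EE M (m - m') * EE M m' := by rw [← EE_add]; ring_nf
  rw [this, EE_one M hM _ h, one_mul]

lemma EE_zero (M : ℕ) : EE M 0 = 1 := by simp [EE]

lemma EE_root (M p q : ℕ) (hM : M ≠ 0) (hp : p ≠ 0) (hq : q * p = 2 * M) :
    EE M (q : ℤ) = Complex.exp (2 * (Real.pi : ℂ) * Complex.I / (p : ℂ)) := by
  rw [EE]
  congr 1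
  have hM' : (2 * (M : ℂ)) ≠ 0 := by simp [Nat.cast_ne_zero.mpr hM]
  have hp' : (p : ℂ) ≠ 0 := Nat.cast_ne_zero.mpr hp
  have hq' : (q : ℂ) * (p : ℂ) = 2 * (M : ℂ) := by exact_mod_cast congrArg (Nat.cast : ℕ → ℂ) hq
  field_simp
  push_cast
  linear_combination hq'

lemma phase_eq (K : Matrix (Fin r) (Fin r) ℤ) (hdet : K.det ≠ 0) (M : ℕ) (hM : M ≠ 0)
    (s u w' : Fin r → ℤ) (h : M • u = K.mulVec w') :
    phaseF r K M s u = EE M (nuF M s u w') := by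
  have hM' : (M : ℂ) ≠ 0 := Nat.cast_ne_zero.mpr hM
  rw [phaseF, ← Complex.exp_add, EE]
  congr 1
  rw [qform_eq K hdet M hM s u w' h, qform_eq K hdet M hM u u w' h, nuF]
  push_cast
  field_simp

end RelabelingAux
open RelabelingAux Matrix Finset in
/-- If the anyon group `ℤ^r/Kℤ^r` is the internal direct sum of cyclic groups generated by
the classes of `a i` of order `n i`, with `n i • a i = K w i`, then the image of the
relabeling phase on `M`-torsion anyons is the group of `P`-th roots of unity, with
`P = lcm_i (2dᵢ / gcd(2dᵢ, 2 sᵀwᵢ + (M/dᵢ) wᵢᵀK wᵢ))`, `dᵢ = gcd(M, nᵢ)`. -/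
theorem relabeling_phase_image_is_cyclic (r k : ℕ) (K : Matrix (Fin r) (Fin r) ℤ)
    (hsymm : K.IsSymm) (hdet : K.det ≠ 0) (heven : ∀ i, Even (K i i))
    (M : ℕ) (hM : 1 ≤ M) (s : Fin r → ℤ)
    (a : Fin k → Fin r → ℤ) (n : Fin k → ℕ) (w : Fin k → Fin r → ℤ)
    (hn : ∀ i, 0 < n i)
    (hKw : ∀ i, n i • a i = K.mulVec (w i))
    (hord : ∀ i, addOrderOf (Submodule.Quotient.mk (a i) : KQuot r K) = n i)
    (hgen : ∀ x : KQuot r K, ∃ c : Fin k → ℤ,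
      x = ∑ i : Fin k, c i • (Submodule.Quotient.mk (a i) : KQuot r K))
    (hindep : ∀ c : Fin k → ℤ,
      (∑ i : Fin k, c i • (Submodule.Quotient.mk (a i) : KQuot r K)) = 0 ↔
        ∀ i, (n i : ℤ) ∣ c i) :
    {z : ℂ | ∃ u : Fin r → ℤ, (∃ w' : Fin r → ℤ, M • u = K.mulVec w') ∧
        z = phaseF r K M s u} =
      {z : ℂ | z ^ (Finset.univ.lcm fun i : Fin k =>
        2 * Nat.gcd M (n i) /
          Int.gcd (2 * (Nat.gcd M (n i) : ℤ))
            (2 * (∑ j : Fin r, s j * w i j) +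
              ((M / Nat.gcd M (n i) : ℕ) : ℤ) *
                (∑ j1 : Fin r, ∑ j2 : Fin r, w i j1 * K j1 j2 * w i j2))) = 1} := by
  classical
  have hM0 : M ≠ 0 := by omega
  -- ## Notation
  let d : Fin k → ℕ := fun i => Nat.gcd M (n i)
  let μ : Fin k → ℕ := fun i => M / Nat.gcd M (n i)
  let m' : Fin k → ℕ := fun i => n i / d i
  let t : Fin k → ℤ := fun i =>
    2 * (∑ j : Fin r, s j * w i j) +
      ((M / Nat.gcd M (n i) : ℕ) : ℤ) *
        (∑ j1 : Fin r, ∑ j2 : Fin r, w i j1 * K j1 j2 * w i j2)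
  let G : Fin k → ℕ := fun i =>
    Int.gcd (2 * (Nat.gcd M (n i) : ℤ)) (t i)
  let p : Fin k → ℕ := fun i => 2 * Nat.gcd M (n i) / G i
  let P : ℕ := Finset.univ.lcm p
  show {z : ℂ | ∃ u : Fin r → ℤ, (∃ w' : Fin r → ℤ, M • u = K.mulVec w') ∧
        z = phaseF r K M s u} = {z : ℂ | z ^ P = 1}
  -- ## Arithmetic facts
  have hd0 : ∀ i, 0 < d i := fun i => Nat.gcd_pos_of_pos_left _ (by omega)
  have hdμ : ∀ i, d i * μ i = M := fun i => Nat.mul_div_cancel' (Nat.gcd_dvd_left _ _)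
  have hdm' : ∀ i, d i * m' i = n i := fun i => Nat.mul_div_cancel' (Nat.gcd_dvd_right _ _)
  have hcopr : ∀ i, Nat.Coprime (μ i) (m' i) := fun i => Nat.coprime_div_gcd_div_gcd (hd0 i)
  have hGdvd : ∀ i, G i ∣ 2 * d i := by
    intro i
    have h1 := Int.gcd_dvd_left (a := 2 * (Nat.gcd M (n i) : ℤ)) (b := t i)
    have h2 : ((G i : ℕ) : ℤ) ∣ ((2 * d i : ℕ) : ℤ) := by push_cast; exact h1
    exact_mod_cast h2
  have hGp : ∀ i, G i * p i = 2 * d i := fun i => Nat.mul_div_cancel' (hGdvd i)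
  have hG0 : ∀ i, G i ≠ 0 := by
    intro i h0
    have h1 := hGp i
    rw [h0, zero_mul] at h1
    have := hd0 i
    omega
  have hp0 : ∀ i, p i ≠ 0 := by
    intro i h0
    have h1 := hGp i
    rw [h0, mul_zero] at h1
    have := hd0 i
    omega
  let t' : Fin k → ℤ := fun i => t i / (G i : ℤ)
  have hGt' : ∀ i, (G i : ℤ) * t' i = t i := fun i =>
    Int.mul_ediv_cancel' (Int.gcd_dvd_right (a := 2 * (Nat.gcd M (n i) : ℤ)) (b := t i))
  have hgcd1 : ∀ i, Int.gcd (p i : ℤ) (t' i) = 1 := by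
    intro i
    have hpos : 0 < Int.gcd (2 * (Nat.gcd M (n i) : ℤ)) (t i) :=
      Nat.pos_of_ne_zero (hG0 i)
    have h := Int.gcd_div_gcd_div_gcd hpos
    have hdiv : (2 * (Nat.gcd M (n i) : ℤ)) / ((G i : ℕ) : ℤ) = (p i : ℤ) := by
      have hcast : ((G i : ℕ) : ℤ) * (p i : ℤ) = 2 * (Nat.gcd M (n i) : ℤ) := by
        exact_mod_cast congrArg (Nat.cast : ℕ → ℤ) (hGp i)
      rw [← hcast]
      exact Int.mul_ediv_cancel_left _ (by exact_mod_cast hG0 i)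
    rw [hdiv] at h
    exact h
  have hp2d : ∀ i, p i ∣ 2 * d i := fun i => Dvd.intro_left (G i) (hGp i)
  have hp2M : ∀ i, p i ∣ 2 * M := fun i =>
    (hp2d i).trans (Nat.mul_dvd_mul_left 2 ⟨μ i, (hdμ i).symm⟩)
  have hP2M : P ∣ 2 * M := Finset.lcm_dvd fun i _ => hp2M i
  have hP0 : P ≠ 0 := by
    intro h0
    rw [h0] at hP2M
    have := Nat.eq_zero_of_zero_dvd hP2M
    omega
  -- ## The torsion generators
  let b : Fin k → Fin r → ℤ := fun i => (m' i : ℤ) • a i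
  let ω : Fin k → Fin r → ℤ := fun i => (μ i : ℤ) • w i
  have hvalb : ∀ i, M • b i = K.mulVec (ω i) := by
    intro i
    have hnat : M * m' i = μ i * n i := by rw [← hdμ i, ← hdm' i]; ring
    have hMm : (M : ℤ) * (m' i : ℤ) = (μ i : ℤ) * (n i : ℤ) := by exact_mod_cast hnat
    calc M • ((m' i : ℤ) • a i) = (M : ℤ) • ((m' i : ℤ) • a i) :=
          (Nat.cast_smul_eq_nsmul ℤ M _).symm
      _ = ((M : ℤ) * (m' i : ℤ)) • a i := (smul_smul _ _ _)
      _ = ((μ i : ℤ) * (n i : ℤ)) • a i := by rw [hMm]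
      _ = (μ i : ℤ) • ((n i : ℤ) • a i) := (smul_smul _ _ _).symm
      _ = (μ i : ℤ) • (n i • a i) :=
          congrArg (fun x => (μ i : ℤ) • x) (Nat.cast_smul_eq_nsmul ℤ (n i) (a i))
      _ = (μ i : ℤ) • K.mulVec (w i) := by rw [hKw i]
      _ = K.mulVec ((μ i : ℤ) • w i) := (Matrix.mulVec_smul _ _ _).symm
  have hQn : ∀ i, ((K.mulVec (w i)) ⬝ᵥ (w i)) = (n i : ℤ) * (a i ⬝ᵥ w i) := by
    intro i
    rw [← hKw i, nsmul_dot]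
  have ht_eq : ∀ i, t i = 2 * (s ⬝ᵥ w i) + (μ i : ℤ) * ((K.mulVec (w i)) ⬝ᵥ (w i)) := by
    intro i
    have h1 : (∑ j : Fin r, s j * w i j) = s ⬝ᵥ w i := rfl
    have h2 : (∑ j1 : Fin r, ∑ j2 : Fin r, w i j1 * K j1 j2 * w i j2)
        = (K.mulVec (w i)) ⬝ᵥ (w i) := by
      simp only [Matrix.mulVec, dotProduct, Finset.sum_mul]
      exact Finset.sum_congr rfl fun j1 _ => Finset.sum_congr rfl fun j2 _ => by ring
    show 2 * (∑ j : Fin r, s j * w i j) + ((M / Nat.gcd M (n i) : ℕ) : ℤ) *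
        (∑ j1 : Fin r, ∑ j2 : Fin r, w i j1 * K j1 j2 * w i j2)
      = 2 * (s ⬝ᵥ w i) + (μ i : ℤ) * ((K.mulVec (w i)) ⬝ᵥ (w i))
    rw [h1, h2]
  have hnub : ∀ i, nuF M s (b i) (ω i) = (μ i : ℤ) * t i := by
    intro i
    have hdμ' : ((d i : ℕ) : ℤ) * ((μ i : ℕ) : ℤ) = (M : ℤ) := by exact_mod_cast hdμ i
    have hdm'' : ((d i : ℕ) : ℤ) * ((m' i : ℕ) : ℤ) = ((n i : ℕ) : ℤ) := by
      exact_mod_cast hdm' i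
    rw [ht_eq i, hQn i]
    show 2 * (s ⬝ᵥ ((μ i : ℤ) • w i)) + (M : ℤ) * (((m' i : ℤ) • a i) ⬝ᵥ ((μ i : ℤ) • w i))
      = (μ i : ℤ) * (2 * (s ⬝ᵥ w i) + (μ i : ℤ) * ((n i : ℤ) * (a i ⬝ᵥ w i)))
    simp only [dotProduct_smul, smul_dotProduct, smul_eq_mul]
    linear_combination (-((μ i : ℤ) * (m' i : ℤ) * (a i ⬝ᵥ w i))) * hdμ'
      + ((μ i : ℤ) * (μ i : ℤ) * (a i ⬝ᵥ w i)) * hdm''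
  have hμGp : ∀ i, μ i * (G i * p i) = 2 * M := by
    intro i
    rw [hGp i, ← hdμ i]
    ring
  have hPg : ∀ i, (2 * M : ℤ) ∣ (P : ℤ) * ((μ i : ℤ) * t i) := by
    intro i
    obtain ⟨q, hq⟩ : p i ∣ P := Finset.dvd_lcm (Finset.mem_univ i)
    have hqZ : (P : ℤ) = (p i : ℤ) * (q : ℤ) := by exact_mod_cast hq
    have hμGpZ : (μ i : ℤ) * ((G i : ℤ) * (p i : ℤ)) = 2 * (M : ℤ) := by
      exact_mod_cast hμGp i
    refine ⟨(q : ℤ) * t' i, ?_⟩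
    calc (P : ℤ) * ((μ i : ℤ) * t i)
        = ((p i : ℤ) * (q : ℤ)) * ((μ i : ℤ) * ((G i : ℤ) * t' i)) := by
          rw [hqZ, hGt' i]
      _ = ((μ i : ℤ) * ((G i : ℤ) * (p i : ℤ))) * ((q : ℤ) * t' i) := by ring
      _ = 2 * (M : ℤ) * ((q : ℤ) * t' i) := by rw [hμGpZ]
  -- ## Membership helpers
  have hone_mem : (1 : ℂ) ∈ {z : ℂ | ∃ u : Fin r → ℤ,
      (∃ w' : Fin r → ℤ, M • u = K.mulVec w') ∧ z = phaseF r K M s u} := by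
    refine ⟨0, ⟨0, by simp⟩, ?_⟩
    rw [phase_eq K hdet M hM0 s 0 0 (by simp)]
    have h0 : nuF M s (0 : Fin r → ℤ) (0 : Fin r → ℤ) = 0 := by simp [nuF]
    rw [h0, EE_zero]
  have hmul_mem : ∀ z1 z2 : ℂ,
      z1 ∈ {z : ℂ | ∃ u : Fin r → ℤ,
        (∃ w' : Fin r → ℤ, M • u = K.mulVec w') ∧ z = phaseF r K M s u} →
      z2 ∈ {z : ℂ | ∃ u : Fin r → ℤ,
        (∃ w' : Fin r → ℤ, M • u = K.mulVec w') ∧ z = phaseF r K M s u} →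
      z1 * z2 ∈ {z : ℂ | ∃ u : Fin r → ℤ,
        (∃ w' : Fin r → ℤ, M • u = K.mulVec w') ∧ z = phaseF r K M s u} := by
    rintro z1 z2 ⟨u1, ⟨w1, hv1⟩, rfl⟩ ⟨u2, ⟨w2, hv2⟩, rfl⟩
    have hv12 : M • (u1 + u2) = K.mulVec (w1 + w2) := by
      rw [smul_add, hv1, hv2, Matrix.mulVec_add]
    refine ⟨u1 + u2, ⟨w1 + w2, hv12⟩, ?_⟩
    rw [phase_eq K hdet M hM0 s u1 w1 hv1, phase_eq K hdet M hM0 s u2 w2 hv2,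
      phase_eq K hdet M hM0 s (u1 + u2) (w1 + w2) hv12, ← EE_add]
    refine (EE_congr M hM0 ?_).symm
    have h := nu_add K hsymm M hM0 s u1 u2 w1 w2 hv1 hv2
    convert h using 1
    ring
  have hmem_p : ∀ i : Fin k, ∀ z : ℂ, z ^ (p i) = 1 →
      z ∈ {z : ℂ | ∃ u : Fin r → ℤ,
        (∃ w' : Fin r → ℤ, M • u = K.mulVec w') ∧ z = phaseF r K M s u} := by
    intro i z hz
    haveI : NeZero (p i) := ⟨hp0 i⟩
    have hprim : IsPrimitiveRoot (Complex.exp (2 * (Real.pi : ℂ) * Complex.I / (p i : ℂ)))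
        (p i) := Complex.isPrimitiveRoot_exp _ (hp0 i)
    obtain ⟨c, _, hcz⟩ := hprim.eq_pow_of_pow_eq_one hz
    have hcop : IsCoprime ((p i : ℕ) : ℤ) (t' i) := Int.isCoprime_iff_gcd_eq_one.mpr (hgcd1 i)
    obtain ⟨α, β, hαβ⟩ := hcop
    set e0 : ℤ := (c : ℤ) * β with he0
    have hval0 : M • (e0 • b i) = K.mulVec (e0 • ω i) := by
      rw [Matrix.mulVec_smul, ← hvalb i, smul_comm]
    refine ⟨e0 • b i, ⟨e0 • ω i, hval0⟩, ?_⟩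
    have hμGpZ : (μ i : ℤ) * ((G i : ℤ) * (p i : ℤ)) = 2 * (M : ℤ) := by
      exact_mod_cast hμGp i
    have hμG : ((μ i * G i : ℕ) : ℤ) = (μ i : ℤ) * (G i : ℤ) := by push_cast; ring
    have hdvd : (2 * M : ℤ) ∣ nuF M s (e0 • b i) (e0 • ω i)
        - (c : ℤ) * ((μ i * G i : ℕ) : ℤ) := by
      have h1 := nu_smul M s (b i) (ω i) e0
      have h2 : (2 * M : ℤ) ∣ e0 * nuF M s (b i) (ω i)
          - (c : ℤ) * ((μ i * G i : ℕ) : ℤ) := by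
        refine ⟨-((c : ℤ) * α), ?_⟩
        rw [hnub i, hμG, ← hGt' i, he0]
        linear_combination ((c : ℤ) * (μ i : ℤ) * (G i : ℤ)) * hαβ
          - ((c : ℤ) * α) * hμGpZ
      have h3 := Int.dvd_add h1 h2
      convert h3 using 1
      ring
    calc z = (Complex.exp (2 * (Real.pi : ℂ) * Complex.I / (p i : ℂ))) ^ c := hcz.symm
      _ = (EE M ((μ i * G i : ℕ) : ℤ)) ^ c := by
          rw [EE_root M (p i) (μ i * G i) hM0 (hp0 i) (by rw [mul_assoc]; exact hμGp i)]
      _ = EE M ((c : ℤ) * ((μ i * G i : ℕ) : ℤ)) := EE_pow M _ c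
      _ = EE M (nuF M s (e0 • b i) (e0 • ω i)) := (EE_congr M hM0 hdvd).symm
      _ = phaseF r K M s (e0 • b i) := (phase_eq K hdet M hM0 s _ _ hval0).symm
  -- ## Closure under lcm: subgroup generated by the p i-th roots of unity
  have hsub : ∀ F : Finset (Fin k), ∀ z : ℂ, z ^ (F.lcm p) = 1 →
      z ∈ {z : ℂ | ∃ u : Fin r → ℤ,
        (∃ w' : Fin r → ℤ, M • u = K.mulVec w') ∧ z = phaseF r K M s u} := by
    intro F
    induction F using Finset.induction with
    | empty =>
      intro z hz
      rw [Finset.lcm_empty, pow_one] at hz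
      rw [hz]
      exact hone_mem
    | @insert i F hni ih =>
      intro z hz
      rw [Finset.lcm_insert] at hz
      have hA : p i ≠ 0 := hp0 i
      have hB : F.lcm p ≠ 0 := by
        have hdvd2M : F.lcm p ∣ 2 * M := Finset.lcm_dvd fun j _ => hp2M j
        intro h0
        rw [h0] at hdvd2M
        have := Nat.eq_zero_of_zero_dvd hdvd2M
        omega
      set A := p i with hAdef
      set B := F.lcm p with hBdef
      have hz' : z ^ Nat.lcm A B = 1 := hz
      have hL : Nat.lcm A B ≠ 0 := Nat.lcm_ne_zero hA hB
      have hz0 : z ≠ 0 := by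
        intro h0
        rw [h0, zero_pow hL] at hz'
        exact zero_ne_one hz'
      set g0 := Nat.gcd A B with hg0def
      have hg0 : 0 < g0 := Nat.gcd_pos_of_pos_left _ (Nat.pos_of_ne_zero hA)
      have hABl : (A / g0) * B = Nat.lcm A B := by
        obtain ⟨A', hA'⟩ := Nat.gcd_dvd_left A B
        have hgl := Nat.gcd_mul_lcm A B
        have h1 : A / g0 = A' := by rw [hA']; exact Nat.mul_div_cancel_left _ hg0
        rw [h1]
        refine Nat.eq_of_mul_eq_mul_left hg0 ?_
        calc g0 * (A' * B) = (g0 * A') * B := by ring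
          _ = A * B := by rw [← hA']
          _ = g0 * Nat.lcm A B := hgl.symm
      have hBAl : (B / g0) * A = Nat.lcm A B := by
        obtain ⟨B', hB'⟩ := Nat.gcd_dvd_right A B
        have hgl := Nat.gcd_mul_lcm A B
        have h1 : B / g0 = B' := by rw [hB']; exact Nat.mul_div_cancel_left _ hg0
        rw [h1]
        refine Nat.eq_of_mul_eq_mul_left hg0 ?_
        calc g0 * (B' * A) = (g0 * B') * A := by ring
          _ = B * A := by rw [← hB']
          _ = g0 * Nat.lcm A B := by rw [mul_comm B A]; exact hgl.symm
      obtain ⟨α, β, hαβ⟩ := (Nat.coprime_div_gcd_div_gcd (m := A) (n := B) hg0).isCoprime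
      have hzL : z ^ ((Nat.lcm A B : ℕ) : ℤ) = 1 := by rw [_root_.zpow_natCast]; exact hz'
      have hz1 : (z ^ (α * ((A / g0 : ℕ) : ℤ))) ^ B = 1 := by
        rw [← _root_.zpow_natCast (z ^ (α * ((A / g0 : ℕ) : ℤ))) B, ← _root_.zpow_mul]
        have hcast : α * ((A / g0 : ℕ) : ℤ) * (B : ℤ) = α * ((Nat.lcm A B : ℕ) : ℤ) := by
          rw [mul_assoc]
          congr 1
          exact_mod_cast congrArg (Nat.cast : ℕ → ℤ) hABl
        rw [hcast, mul_comm α, _root_.zpow_mul, _root_.zpow_natCast, hz', _root_.one_zpow]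
      have hm1 := ih _ hz1
      have hz2 : (z ^ (β * ((B / g0 : ℕ) : ℤ))) ^ A = 1 := by
        rw [← _root_.zpow_natCast (z ^ (β * ((B / g0 : ℕ) : ℤ))) A, ← _root_.zpow_mul]
        have hcast : β * ((B / g0 : ℕ) : ℤ) * (A : ℤ) = β * ((Nat.lcm A B : ℕ) : ℤ) := by
          rw [mul_assoc]
          congr 1
          exact_mod_cast congrArg (Nat.cast : ℕ → ℤ) hBAl
        rw [hcast, mul_comm β, _root_.zpow_mul, _root_.zpow_natCast, hz', _root_.one_zpow]
      have hm2 := hmem_p i _ hz2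
      have hsplit : z = z ^ (α * ((A / g0 : ℕ) : ℤ)) * z ^ (β * ((B / g0 : ℕ) : ℤ)) := by
        calc z = z ^ (1 : ℤ) := (_root_.zpow_one z).symm
          _ = z ^ (α * ((A / g0 : ℕ) : ℤ) + β * ((B / g0 : ℕ) : ℤ)) := by rw [hαβ]
          _ = _ := zpow_add₀ hz0 _ _
      rw [hsplit]
      exact hmul_mem _ _ hm1 hm2
  -- ## Conclusion
  ext z
  simp only [Set.mem_setOf_eq]
  constructor
  · rintro ⟨u, ⟨w', hval⟩, rfl⟩
    obtain ⟨c, hc⟩ := hgen (Submodule.Quotient.mk u)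
    have hMu0 : (Submodule.Quotient.mk (M • u) : KQuot r K) = 0 := by
      rw [Submodule.Quotient.mk_eq_zero]
      exact ⟨w', by rw [Matrix.mulVecLin_apply]; exact hval.symm⟩
    have hdvd : ∀ i, (n i : ℤ) ∣ (M : ℤ) * c i := by
      apply (hindep _).mp
      calc ∑ i, ((M : ℤ) * c i) • (Submodule.Quotient.mk (a i) : KQuot r K)
          = (M : ℤ) • ∑ i, c i • (Submodule.Quotient.mk (a i) : KQuot r K) := by
            rw [Finset.smul_sum]
            exact Finset.sum_congr rfl fun i _ => (smul_smul (M : ℤ) (c i) _).symm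
        _ = (M : ℤ) • (Submodule.Quotient.mk u : KQuot r K) := by rw [← hc]
        _ = (Submodule.Quotient.mk ((M : ℤ) • u) : KQuot r K) :=
            (Submodule.Quotient.mk_smul _ _ _).symm
        _ = (Submodule.Quotient.mk (M • u) : KQuot r K) := by
            rw [Nat.cast_smul_eq_nsmul ℤ]
        _ = 0 := hMu0
    have hmc : ∀ i, (m' i : ℤ) ∣ c i := by
      intro i
      have e1 : ((n i : ℕ) : ℤ) = (d i : ℤ) * (m' i : ℤ) := by exact_mod_cast (hdm' i).symm
      have e2 : ((M : ℕ) : ℤ) = (d i : ℤ) * (μ i : ℤ) := by exact_mod_cast (hdμ i).symm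
      have h1 : ((d i : ℤ) * (m' i : ℤ)) ∣ ((d i : ℤ) * (μ i : ℤ)) * c i := by
        rw [← e1, ← e2]; exact hdvd i
      obtain ⟨x, hx⟩ := h1
      have h2 : (m' i : ℤ) ∣ (μ i : ℤ) * c i := by
        refine ⟨x, ?_⟩
        have hd0' : (d i : ℤ) ≠ 0 := by exact_mod_cast (hd0 i).ne'
        apply mul_left_cancel₀ hd0'
        linear_combination hx
      exact (((hcopr i).symm).isCoprime).dvd_of_dvd_mul_left h2
    choose e he using hmc
    set B0 : Fin r → ℤ := ∑ i, e i • b i with hB0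
    set Ω0 : Fin r → ℤ := ∑ i, e i • ω i with hΩ0
    have hmkB : (Submodule.Quotient.mk u : KQuot r K) = Submodule.Quotient.mk B0 := by
      rw [hc, hB0]
      have hms : (Submodule.Quotient.mk (∑ i, e i • b i) : KQuot r K)
          = ∑ i, e i • (Submodule.Quotient.mk (b i) : KQuot r K) := by
        rw [← Submodule.mkQ_apply, map_sum]
        exact Finset.sum_congr rfl fun i _ => by rw [_root_.map_smul, Submodule.mkQ_apply]
      rw [hms]
      refine Finset.sum_congr rfl fun i _ => ?_
      rw [show (Submodule.Quotient.mk (b i) : KQuot r K)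
          = (m' i : ℤ) • Submodule.Quotient.mk (a i) from Submodule.Quotient.mk_smul _ _ _,
        smul_smul, he i, mul_comm]
    have hsubm : u - B0 ∈ LinearMap.range (Matrix.mulVecLin K) :=
      (Submodule.Quotient.eq _).mp hmkB
    obtain ⟨v, hv⟩ := hsubm
    have hv' : K.mulVec v = u - B0 := by rw [← Matrix.mulVecLin_apply]; exact hv
    have hu_dec : u = B0 + K.mulVec v := by rw [hv']; abel
    have hvalsmul : ∀ i, M • (e i • b i) = K.mulVec (e i • ω i) := fun i => by
      rw [Matrix.mulVec_smul, ← hvalb i, smul_comm]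
    have hvalB : M • B0 = K.mulVec Ω0 := by
      rw [hB0, hΩ0, Finset.smul_sum]
      have hKs : K.mulVec (∑ i, e i • ω i) = ∑ i, K.mulVec (e i • ω i) := by
        rw [← Matrix.mulVecLin_apply, map_sum]
        simp [Matrix.mulVecLin_apply]
      rw [hKs]
      exact Finset.sum_congr rfl fun i _ => hvalsmul i
    have hvalu2 : M • u = K.mulVec (Ω0 + M • v) := by
      rw [hu_dec, smul_add, hvalB, Matrix.mulVec_add, Matrix.mulVec_smul]
    have hwW : w' = Ω0 + M • v := mulVec_int_inj K hdet (by rw [← hval, hvalu2])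
    have h_add := nu_add K hsymm M hM0 s B0 (K.mulVec v) Ω0 (M • v) hvalB
      (Matrix.mulVec_smul _ _ _).symm
    have h_Kv := nu_Kv K hsymm heven M s v
    have h_sum := nu_sum K hsymm M hM0 s Finset.univ (fun i => e i • b i)
      (fun i => e i • ω i) (fun i _ => hvalsmul i)
    have h_smulsum : (2 * M : ℤ) ∣
        ∑ i, (nuF M s (e i • b i) (e i • ω i) - e i * nuF M s (b i) (ω i)) :=
      Finset.dvd_sum fun i _ => nu_smul M s (b i) (ω i) (e i)
    have hsum_split : ∑ i, (nuF M s (e i • b i) (e i • ω i) - e i * nuF M s (b i) (ω i))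
        = (∑ i, nuF M s (e i • b i) (e i • ω i)) - ∑ i, e i * ((μ i : ℤ) * t i) := by
      rw [Finset.sum_sub_distrib]
      congr 1
      exact Finset.sum_congr rfl fun i _ => by rw [hnub i]
    have hfinal : (2 * M : ℤ) ∣ nuF M s u w' - ∑ i, e i * ((μ i : ℤ) * t i) := by
      rw [hwW, hu_dec]
      have D := Int.dvd_add (Int.dvd_add (Int.dvd_add h_add h_Kv) h_sum) h_smulsum
      convert D using 1
      rw [hsum_split, hB0, hΩ0]
      ring
    rw [phase_eq K hdet M hM0 s u w' hval, EE_pow]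
    apply EE_one M hM0
    have hSS : ∑ i, e i * ((P : ℤ) * ((μ i : ℤ) * t i))
        = (P : ℤ) * ∑ i, e i * ((μ i : ℤ) * t i) := by
      rw [Finset.mul_sum]
      exact Finset.sum_congr rfl fun i _ => by ring
    have D2 : (2 * M : ℤ) ∣ (P : ℤ) * (nuF M s u w' - ∑ i, e i * ((μ i : ℤ) * t i))
        + ∑ i, e i * ((P : ℤ) * ((μ i : ℤ) * t i)) :=
      Int.dvd_add (hfinal.mul_left _) (Finset.dvd_sum fun i _ => (hPg i).mul_left (e i))
    convert D2 using 1
    rw [hSS]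
    ring
  · intro hz
    exact hsub Finset.univ z hz
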